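/- Let H be a complex Hilbert space, 𝒱 and 𝒲 closed subspaces with H = 𝒱 ⊕ 𝒲ᗮ, and P = π_{𝒱,𝒲ᗮ}. Let (W,w) be a fusion frame for 𝒲 with synthesis operator T_W, (V,v) a fusion frame for 𝒱 with synthesis operator T_V, Q : K_W → K_V a bounded operator, and ε ≥ 0. Then: (i) if for every f ∈ H the vector f_r := T_V Q T_W* f satisfies ‖T_W* f_r − T_W* f‖ ≤ (ε γ(T_W) / ‖P‖) ‖f‖, then ‖T_V Q T_W* − P‖ ≤ ε; and (ii) if ‖T_V Q T_W* − P‖ ≤ ε, then for every f ∈ H, ‖T_W* (T_V Q T_W* f) − T_W* f‖ ≤ ε ‖T_W‖ ‖f‖ (i.e., f_r = T_V Q T_W* f is an (ε‖T_W‖)-consistent reconstruction of f in 𝒱). -/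

import Mathlib

open scoped ENNReal
set_option synthInstance.maxHeartbeats 1000000
set_option maxHeartbeats 1000000
noncomputable section

/-- Reduced minimum modulus of a bounded operator between inner product spaces:
`γ(A) = inf {‖A x‖ : ‖x‖ = 1, x ∈ (ker A)ᗮ}`. -/
def redMinMod {E F : Type*} [NormedAddCommGroup E] [InnerProductSpace ℂ E]
    [NormedAddCommGroup F] [InnerProductSpace ℂ F] (A : E →L[ℂ] F) : ℝ :=
  sInf ((fun x => ‖A x‖) '' {x : E | ‖x‖ = 1 ∧ x ∈ (LinearMap.ker (A : E →ₗ[ℂ] F))ᗮ})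

open scoped InnerProductSpace

section AuxRedMinMod

variable {E F : Type*} [NormedAddCommGroup E] [InnerProductSpace ℂ E]
    [NormedAddCommGroup F] [InnerProductSpace ℂ F]

lemma redMinMod_nonneg (A : E →L[ℂ] F) : 0 ≤ redMinMod A := by
  apply Real.sInf_nonneg
  rintro x ⟨y, -, rfl⟩
  exact norm_nonneg _

lemma redMinMod_mul_le (A : E →L[ℂ] F) {x : E} (hx : x ∈ (LinearMap.ker (A : E →ₗ[ℂ] F))ᗮ) :
    redMinMod A * ‖x‖ ≤ ‖A x‖ := by
  rcases eq_or_ne x 0 with rfl | hx0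
  · simp
  · have hxn : (0:ℝ) < ‖x‖ := norm_pos_iff.mpr hx0
    have hmem : ‖A (‖x‖⁻¹ • x)‖ ∈ (fun x => ‖A x‖) '' {x : E | ‖x‖ = 1 ∧ x ∈ (LinearMap.ker (A : E →ₗ[ℂ] F))ᗮ} := by
      refine ⟨‖x‖⁻¹ • x, ⟨?_, Submodule.smul_mem _ _ hx⟩, rfl⟩
      simp [norm_smul, abs_of_pos (inv_pos.mpr hxn), inv_mul_cancel₀ hxn.ne']
    have h1 : redMinMod A ≤ ‖A (‖x‖⁻¹ • x)‖ :=
      csInf_le ⟨0, by rintro y ⟨z, -, rfl⟩; exact norm_nonneg _⟩ hmem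
    have h2 : ‖A (‖x‖⁻¹ • x)‖ = ‖x‖⁻¹ * ‖A x‖ := by
      rw [A.map_smul_of_tower, norm_smul]
      simp [abs_of_pos (inv_pos.mpr hxn)]
    rw [h2] at h1
    calc redMinMod A * ‖x‖ ≤ (‖x‖⁻¹ * ‖A x‖) * ‖x‖ := by
          exact mul_le_mul_of_nonneg_right h1 (norm_nonneg _)
      _ = ‖A x‖ := by field_simp

lemma redMinMod_mul_le_norm_adjoint [CompleteSpace E] [CompleteSpace F]
    (A : E →L[ℂ] F) {y : F} (hy : y ∈ LinearMap.range (A : E →ₗ[ℂ] F)) :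
    redMinMod A * ‖y‖ ≤ ‖ContinuousLinearMap.adjoint A y‖ := by
  haveI : CompleteSpace (LinearMap.ker (A : E →ₗ[ℂ] F)) := (ContinuousLinearMap.isClosed_ker A).completeSpace_coe
  obtain ⟨x0, hx0⟩ := hy
  obtain ⟨k, hk, z, hz, hsum⟩ := (LinearMap.ker (A : E →ₗ[ℂ] F)).exists_add_mem_mem_orthogonal x0
  have hAz : A z = y := by
    have hk0 : (A : E →ₗ[ℂ] F) k = 0 := hk
    rw [← hx0, hsum, map_add, hk0, zero_add]; rfl
  rcases eq_or_ne y 0 with rfl | hy0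
  · simp
  have hyn : (0:ℝ) < ‖y‖ := norm_pos_iff.mpr hy0
  have h1 : redMinMod A * ‖z‖ ≤ ‖y‖ := hAz ▸ redMinMod_mul_le A hz
  have h2 : ‖y‖ ^ 2 ≤ ‖ContinuousLinearMap.adjoint A y‖ * ‖z‖ := by
    have hinner : ⟪ContinuousLinearMap.adjoint A y, z⟫_ℂ = ⟪y, y⟫_ℂ := by
      rw [ContinuousLinearMap.adjoint_inner_left, hAz]
    have := norm_inner_le_norm (𝕜 := ℂ) (ContinuousLinearMap.adjoint A y) z
    rw [hinner] at this
    calc ‖y‖ ^ 2 = ‖⟪y, y⟫_ℂ‖ := by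
          rw [inner_self_eq_norm_sq_to_K]; simp [sq_abs]
      _ ≤ _ := this
  have hγ : 0 ≤ redMinMod A := redMinMod_nonneg A
  have h3 : redMinMod A * ‖y‖ ^ 2 ≤ ‖ContinuousLinearMap.adjoint A y‖ * ‖y‖ := by
    calc redMinMod A * ‖y‖ ^ 2 ≤ redMinMod A * (‖ContinuousLinearMap.adjoint A y‖ * ‖z‖) :=
          mul_le_mul_of_nonneg_left h2 hγ
      _ = ‖ContinuousLinearMap.adjoint A y‖ * (redMinMod A * ‖z‖) := by ring
      _ ≤ ‖ContinuousLinearMap.adjoint A y‖ * ‖y‖ :=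
          mul_le_mul_of_nonneg_left h1 (norm_nonneg _)
  have := mul_le_mul_of_nonneg_right h3 (le_of_lt (inv_pos.mpr hyn))
  calc redMinMod A * ‖y‖ = redMinMod A * ‖y‖ ^ 2 * ‖y‖⁻¹ := by field_simp
    _ ≤ ‖ContinuousLinearMap.adjoint A y‖ * ‖y‖ * ‖y‖⁻¹ := this
    _ = ‖ContinuousLinearMap.adjoint A y‖ := by field_simp

lemma redMinMod_pos [CompleteSpace E] [CompleteSpace F]
    (A : E →L[ℂ] F) (hA : A ≠ 0) (hcl : IsClosed (LinearMap.range (A : E →ₗ[ℂ] F) : Set F)) :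
    0 < redMinMod A := by
  haveI : CompleteSpace (LinearMap.ker (A : E →ₗ[ℂ] F)) := (ContinuousLinearMap.isClosed_ker A).completeSpace_coe
  haveI : CompleteSpace ((LinearMap.ker (A : E →ₗ[ℂ] F))ᗮ : Submodule ℂ E) :=
    (Submodule.isClosed_orthogonal _).completeSpace_coe
  haveI : CompleteSpace (LinearMap.range (A : E →ₗ[ℂ] F)) := hcl.completeSpace_coe
  set K := (LinearMap.ker (A : E →ₗ[ℂ] F))ᗮ with hK
  set S : K →L[ℂ] LinearMap.range (A : E →ₗ[ℂ] F) :=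
    (A.comp K.subtypeL).codRestrict _ (fun x => ⟨x, rfl⟩) with hS
  have hSapp : ∀ x : K, (S x : F) = A x := fun x => rfl
  have hinj : Function.Injective S := by
    intro a b hab
    have h0 : A ((a : E) - b) = 0 := by
      have : (S a : F) = S b := by rw [hab]
      simpa [hSapp, map_sub, sub_eq_zero] using this
    have hmem : ((a : E) - b) ∈ LinearMap.ker (A : E →ₗ[ℂ] F) := h0
    have hmem' : ((a : E) - b) ∈ K := Submodule.sub_mem _ a.2 b.2
    have : ((a : E) - b) = 0 := by
      have := (Submodule.mem_orthogonal _ _).mp hmem' _ hmem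
      simpa [inner_self_eq_zero] using this
    exact Subtype.ext (sub_eq_zero.mp this)
  have hsurj : Function.Surjective S := by
    rintro ⟨y, hy⟩
    obtain ⟨x0, hx0⟩ := hy
    obtain ⟨k, hk, z, hz, hsum⟩ := (LinearMap.ker (A : E →ₗ[ℂ] F)).exists_add_mem_mem_orthogonal x0
    refine ⟨⟨z, hz⟩, ?_⟩
    apply Subtype.ext
    have hk0 : (A : E →ₗ[ℂ] F) k = 0 := hk
    simp only [hSapp]
    rw [← hx0, hsum, map_add, hk0, zero_add]; rfl
  obtain ⟨C, hC0, hC⟩ := ContinuousLinearMap.exists_preimage_norm_le S hsurj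
  -- nonempty set of unit vectors in K
  have hKne : K ≠ ⊥ := by
    intro h
    apply hA
    have hker : LinearMap.ker (A : E →ₗ[ℂ] F) = ⊤ := Submodule.orthogonal_eq_bot_iff.mp h
    ext x
    have : x ∈ LinearMap.ker (A : E →ₗ[ℂ] F) := hker ▸ Submodule.mem_top
    simpa using this
  obtain ⟨x1, hx1K, hx1ne⟩ := Submodule.exists_mem_ne_zero_of_ne_bot hKne
  have hx1n : (0:ℝ) < ‖x1‖ := norm_pos_iff.mpr hx1ne
  have hne : Set.Nonempty ((fun x => ‖A x‖) '' {x : E | ‖x‖ = 1 ∧ x ∈ (LinearMap.ker (A : E →ₗ[ℂ] F))ᗮ}) := by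
    refine ⟨‖A (‖x1‖⁻¹ • x1)‖, ⟨‖x1‖⁻¹ • x1, ⟨?_, Submodule.smul_mem _ _ hx1K⟩, rfl⟩⟩
    simp [norm_smul, abs_of_pos (inv_pos.mpr hx1n), inv_mul_cancel₀ hx1n.ne']
  have hbound : ∀ b ∈ (fun x => ‖A x‖) '' {x : E | ‖x‖ = 1 ∧ x ∈ (LinearMap.ker (A : E →ₗ[ℂ] F))ᗮ}, C⁻¹ ≤ b := by
    rintro b ⟨x, ⟨hxn, hxK⟩, rfl⟩
    obtain ⟨x', hx'eq, hx'le⟩ := hC (S ⟨x, hxK⟩)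
    have hx'x : x' = ⟨x, hxK⟩ := hinj hx'eq
    rw [hx'x] at hx'le
    have hnormx : ‖(⟨x, hxK⟩ : K)‖ = 1 := hxn
    have hnormS : ‖S ⟨x, hxK⟩‖ = ‖A x‖ := rfl
    rw [hnormx, hnormS] at hx'le
    rw [inv_le_iff_one_le_mul₀ hC0]
    linarith
  have : C⁻¹ ≤ redMinMod A := le_csInf hne hbound
  exact lt_of_lt_of_le (inv_pos.mpr hC0) this

end AuxRedMinMod

/-- `ε`-consistent reconstruction versus `ε`-approximate oblique duality:
(i) if `f_r = T_V Q T_W* f` is an `(ε γ(T_W)/‖P‖)`-consistent reconstruction of every `f`,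
then `‖T_V Q T_W* − P‖ ≤ ε`; (ii) if `‖T_V Q T_W* − P‖ ≤ ε`, then `f_r = T_V Q T_W* f` is an
`(ε ‖T_W‖)`-consistent reconstruction of every `f` in `𝒱`. -/
theorem consistent_reconstruction_iff_approx_dual
    {H : Type*} [NormedAddCommGroup H] [InnerProductSpace ℂ H] [CompleteSpace H]
    {I : Type*} [Countable I]
    (𝒱 𝒲 : Submodule ℂ H) [CompleteSpace 𝒱] [CompleteSpace 𝒲]
    (P : H →L[ℂ] H) (hPidem : P ∘L P = P)
    (hPran : LinearMap.range (P : H →ₗ[ℂ] H) = 𝒱) (hPker : LinearMap.ker (P : H →ₗ[ℂ] H) = 𝒲ᗮ)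
    (W : I → Submodule ℂ H) [∀ i, CompleteSpace (W i)] (hW : ∀ i, W i ≤ 𝒲)
    (w : I → ℝ) (hw : ∀ i, 0 < w i)
    (TW : lp (fun i => W i) 2 →L[ℂ] H)
    (hTW : ∀ g : lp (fun i => W i) 2, HasSum (fun i => (w i : ℂ) • (g i : H)) (TW g))
    (hWfr : LinearMap.range (TW : lp (fun i => W i) 2 →ₗ[ℂ] H) = 𝒲)
    (V : I → Submodule ℂ H) [∀ i, CompleteSpace (V i)] (hV : ∀ i, V i ≤ 𝒱)
    (v : I → ℝ) (hv : ∀ i, 0 < v i)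
    (TV : lp (fun i => V i) 2 →L[ℂ] H)
    (hTV : ∀ g : lp (fun i => V i) 2, HasSum (fun i => (v i : ℂ) • (g i : H)) (TV g))
    (hVfr : LinearMap.range (TV : lp (fun i => V i) 2 →ₗ[ℂ] H) = 𝒱)
    (Q : lp (fun i => W i) 2 →L[ℂ] lp (fun i => V i) 2)
    (ε : ℝ) (hε : 0 ≤ ε) :
    ((∀ f : H,
        ‖ContinuousLinearMap.adjoint TW (TV (Q (ContinuousLinearMap.adjoint TW f))) -
            ContinuousLinearMap.adjoint TW f‖ ≤ (ε * redMinMod TW / ‖P‖) * ‖f‖) →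
      ‖TV ∘L Q ∘L ContinuousLinearMap.adjoint TW - P‖ ≤ ε) ∧
    (‖TV ∘L Q ∘L ContinuousLinearMap.adjoint TW - P‖ ≤ ε →
      ∀ f : H,
        ‖ContinuousLinearMap.adjoint TW (TV (Q (ContinuousLinearMap.adjoint TW f))) -
            ContinuousLinearMap.adjoint TW f‖ ≤ ε * ‖TW‖ * ‖f‖) := by
  set Ad := ContinuousLinearMap.adjoint TW with hAd
  -- adjoint kills 𝒲ᗮ
  have hkill : ∀ y ∈ 𝒲ᗮ, Ad y = 0 := by
    intro y hy
    rw [← inner_self_eq_zero (𝕜 := ℂ) (x := Ad y)]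
    rw [hAd, ContinuousLinearMap.adjoint_inner_left]
    have hmem : TW (ContinuousLinearMap.adjoint TW y) ∈ 𝒲 := hWfr ▸ ⟨_, rfl⟩
    exact (Submodule.mem_orthogonal' _ _).mp hy _ hmem
  -- P fixes 𝒱
  have hPfix : ∀ g ∈ 𝒱, P g = g := by
    intro g hg
    obtain ⟨y, rfl⟩ := hPran ▸ hg
    have := congrFun (congrArg DFunLike.coe hPidem) y
    simpa using this
  -- adjoint of TW composed with P equals adjoint
  have hAdP : ∀ f : H, Ad (P f) = Ad f := by
    intro f
    have hmem : P f - f ∈ 𝒲ᗮ := by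
      rw [← hPker]
      have h := congrFun (congrArg DFunLike.coe hPidem) f
      simp only [ContinuousLinearMap.coe_comp', Function.comp_apply] at h
      show P (P f - f) = 0
      rw [map_sub, h, sub_self]
    have := hkill _ hmem
    rw [map_sub, sub_eq_zero] at this
    exact this
  -- key inequality: γ ‖g‖ ≤ ‖P‖ ‖Ad g‖ for g ∈ 𝒱
  have hkey : ∀ g ∈ 𝒱, redMinMod TW * ‖g‖ ≤ ‖P‖ * ‖Ad g‖ := by
    intro g hg
    set m := (𝒲.orthogonalProjectionOnto g : H) with hm
    have hgm : g - m ∈ 𝒲ᗮ := Submodule.sub_starProjection_mem_orthogonal (K := 𝒲) g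
    have hAdm : Ad g = Ad m := by
      have := hkill _ hgm
      rw [map_sub, sub_eq_zero] at this
      exact this
    have hgPm : g = P m := by
      have h1 : P g = g := hPfix g hg
      have h2 : P (g - m) = 0 := by rw [← hPker] at hgm; exact hgm
      rw [map_sub, sub_eq_zero] at h2
      rw [← h1, h2]
    have hgle : ‖g‖ ≤ ‖P‖ * ‖m‖ := by
      calc ‖g‖ = ‖P m‖ := by rw [← hgPm]
        _ ≤ ‖P‖ * ‖m‖ := P.le_opNorm m
    have hmW : m ∈ LinearMap.range (TW : lp (fun i => W i) 2 →ₗ[ℂ] H) := hWfr ▸ (𝒲.orthogonalProjectionOnto g).2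
    have hγm : redMinMod TW * ‖m‖ ≤ ‖Ad m‖ := redMinMod_mul_le_norm_adjoint TW hmW
    have hγ0 : 0 ≤ redMinMod TW := redMinMod_nonneg TW
    calc redMinMod TW * ‖g‖ ≤ redMinMod TW * (‖P‖ * ‖m‖) := mul_le_mul_of_nonneg_left hgle hγ0
      _ = ‖P‖ * (redMinMod TW * ‖m‖) := by ring
      _ ≤ ‖P‖ * ‖Ad m‖ := mul_le_mul_of_nonneg_left hγm (norm_nonneg _)
      _ = ‖P‖ * ‖Ad g‖ := by rw [hAdm]
  have hdiff : ∀ f : H, Ad (TV (Q (Ad f))) - Ad f =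
      Ad ((TV ∘L Q ∘L Ad - P) f) := by
    intro f
    rw [ContinuousLinearMap.sub_apply, map_sub, hAdP]
    rfl
  constructor
  · -- (i)
    intro hcons
    by_cases hP : P = 0
    · have h𝒱 : 𝒱 = ⊥ := by rw [← hPran, hP]; ext x; simp [eq_comm]
      have hzero : (TV ∘L Q ∘L Ad - P) = 0 := by
        ext f
        have hmem : TV (Q (Ad f)) ∈ 𝒱 := hVfr ▸ ⟨_, rfl⟩
        rw [h𝒱, Submodule.mem_bot] at hmem
        simp [hP, hmem]
      rw [hzero]
      simpa using hε
    · have hTWne : TW ≠ 0 := by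
        intro h0
        apply hP
        have h𝒲 : 𝒲 = ⊥ := by rw [← hWfr, h0]; ext x; simp [eq_comm]
        ext f
        have : f ∈ LinearMap.ker (P : H →ₗ[ℂ] H) := by
          rw [hPker, h𝒲, Submodule.bot_orthogonal_eq_top]; trivial
        simpa using this
      have hcl : IsClosed (LinearMap.range (TW : lp (fun i => W i) 2 →ₗ[ℂ] H) : Set H) := by
        rw [hWfr]
        exact (completeSpace_coe_iff_isComplete.mp ‹CompleteSpace 𝒲›).isClosed
      have hγpos : 0 < redMinMod TW := redMinMod_pos TW hTWne hcl
      have hPn : 0 < ‖P‖ := norm_pos_iff.mpr hP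
      apply ContinuousLinearMap.opNorm_le_bound _ hε
      intro f
      set h := (TV ∘L Q ∘L Ad - P) f with hh
      have hmem : h ∈ 𝒱 := by
        have h1 : TV (Q (Ad f)) ∈ 𝒱 := hVfr ▸ ⟨_, rfl⟩
        have h2 : P f ∈ 𝒱 := hPran ▸ ⟨_, rfl⟩
        have : h = TV (Q (Ad f)) - P f := rfl
        rw [this]
        exact Submodule.sub_mem _ h1 h2
      have hineq : redMinMod TW * ‖h‖ ≤ ‖P‖ * ‖Ad h‖ := hkey h hmem
      have hAdh : ‖Ad h‖ ≤ (ε * redMinMod TW / ‖P‖) * ‖f‖ := by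
        rw [hh, ← hdiff f]
        exact hcons f
      have : redMinMod TW * ‖h‖ ≤ redMinMod TW * (ε * ‖f‖) := by
        calc redMinMod TW * ‖h‖ ≤ ‖P‖ * ((ε * redMinMod TW / ‖P‖) * ‖f‖) :=
              le_trans hineq (mul_le_mul_of_nonneg_left hAdh (norm_nonneg _))
          _ = redMinMod TW * (ε * ‖f‖) := by field_simp
      exact le_of_mul_le_mul_left this hγpos
  · -- (ii)
    intro hd f
    rw [hdiff f]
    have hAdnorm : ‖Ad‖ = ‖TW‖ := by
      rw [hAd]
      exact (ContinuousLinearMap.adjoint (𝕜 := ℂ)).norm_map TW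
    calc ‖Ad ((TV ∘L Q ∘L Ad - P) f)‖ ≤ ‖Ad‖ * ‖(TV ∘L Q ∘L Ad - P) f‖ := Ad.le_opNorm _
      _ ≤ ‖TW‖ * (‖TV ∘L Q ∘L Ad - P‖ * ‖f‖) := by
          rw [hAdnorm]; gcongr
          exact (TV ∘L Q ∘L Ad - P).le_opNorm f
      _ ≤ ‖TW‖ * (ε * ‖f‖) := by gcongr
      _ = ε * ‖TW‖ * ‖f‖ := by ring
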